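/- arXiv:2306.10842 — 2 statements merged into one kernel-verified Lean document; each statement's English description precedes it below -/
import Mathlib

section
/- Let K be a fractal square of order n with digit set D. Let α ∈ {(1,0),(−1,0),(0,1),(0,−1)} and let β be a unit coordinate vector orthogonal to α. Then F_α = (F_α + G_α)/n ∪ (F_{α+β} + G_{α,β})/n ∪ (F_{α−β} + G_{α,−β})/n, where F_γ = K ∩ (K + γ) for γ ∈ {−1,0,1}², G_α = D_α ∩ (D_{−α} + (n−1)α), G_{α,β} = D_α ∩ (D_{−α} + (n−1)α − β), and G_{α,−β} = D_α ∩ (D_{−α} + (n−1)α + β). -/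
open Set Pointwise

noncomputable section

/-- The canonical embedding of `ℤ × ℤ` into `ℝ × ℝ`. -/
def coeZ2 (d : ℤ × ℤ) : ℝ × ℝ := ((d.1 : ℝ), (d.2 : ℝ))

/-- The contraction similarity `x ↦ (x + d) / n` of the plane. -/
def pieceMap (n : ℕ) (d : ℤ × ℤ) (x : ℝ × ℝ) : ℝ × ℝ := (n : ℝ)⁻¹ • (x + coeZ2 d)

/-- `K` is a fractal square of order `n` with digit set `D ⊆ {0,…,n-1}²`,
`1 < |D| < n²`: a nonempty compact set with `K = (K + D)/n`. -/
def IsFractalSquare (n : ℕ) (D : Set (ℤ × ℤ)) (K : Set (ℝ × ℝ)) : Prop :=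
  2 ≤ n ∧ D ⊆ Set.Icc (0, 0) ((n : ℤ) - 1, (n : ℤ) - 1) ∧
  1 < Nat.card D ∧ Nat.card D < n ^ 2 ∧
  K.Nonempty ∧ IsCompact K ∧
  K = ⋃ d ∈ D, pieceMap n d '' K

/-- A dendrite: a nonempty compact, connected, locally connected (planar) set
containing no subset homeomorphic to the circle. -/
def IsDendrite (K : Set (ℝ × ℝ)) : Prop :=
  K.Nonempty ∧ IsCompact K ∧ IsConnected K ∧ LocallyConnectedSpace K ∧
  ¬ ∃ S : Set (ℝ × ℝ), S ⊆ K ∧ Nonempty (S ≃ₜ Circle)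

/-- The unit square `P = [0,1]²`. -/
def unitSq : Set (ℝ × ℝ) := Set.Icc (0, 0) (1, 1)

/-- The face `P_α = P ∩ (P + α)` of the unit square. -/
def faceP (α : ℤ × ℤ) : Set (ℝ × ℝ) := unitSq ∩ ((· + coeZ2 α) '' unitSq)

/-- The face digit set `D_α = D ∩ ((n-1)·P_α)`. -/
def faceD (n : ℕ) (D : Set (ℤ × ℤ)) (α : ℤ × ℤ) : Set (ℤ × ℤ) :=
  {d ∈ D | coeZ2 d ∈ ((n : ℝ) - 1) • faceP α}

/-- `F_α = K ∩ (K + α)`. -/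
def Fset (K : Set (ℝ × ℝ)) (α : ℤ × ℤ) : Set (ℝ × ℝ) := K ∩ ((· + coeZ2 α) '' K)

/-- `G_{α,β} = D_α ∩ (D_{-α} + (n-1)α - β)`. -/
def Gset (n : ℕ) (D : Set (ℤ × ℤ)) (α β : ℤ × ℤ) : Set (ℤ × ℤ) :=
  faceD n D α ∩ ((fun d => d + (((n : ℤ) - 1) • α - β)) '' faceD n D (-α))

lemma unitSq_compact : IsCompact unitSq := isCompact_Icc
lemma unitSq_nonempty : unitSq.Nonempty := ⟨(0,0), by simp [unitSq, Set.mem_Icc, Prod.le_def]⟩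

lemma pieceMap_mapsTo (n : ℕ) (hn : 2 ≤ n) (d : ℤ × ℤ)
    (hd : d ∈ Set.Icc (0, 0) ((n : ℤ) - 1, (n : ℤ) - 1)) :
    Set.MapsTo (pieceMap n d) unitSq unitSq := by
  intro z hz
  simp only [unitSq, Set.mem_Icc, Prod.le_def] at hz ⊢
  simp only [Set.mem_Icc, Prod.le_def] at hd
  obtain ⟨⟨h1, h2⟩, h3, h4⟩ := hz
  obtain ⟨⟨g1, g2⟩, g3, g4⟩ := hd
  have hn0 : (0:ℝ) < n := by positivity
  have hd1 : (0:ℝ) ≤ (d.1:ℝ) := by exact_mod_cast g1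
  have hd2 : (0:ℝ) ≤ (d.2:ℝ) := by exact_mod_cast g2
  have hd3 : (d.1:ℝ) ≤ (n:ℝ) - 1 := by exact_mod_cast g3
  have hd4 : (d.2:ℝ) ≤ (n:ℝ) - 1 := by exact_mod_cast g4
  constructor <;> constructor
  all_goals
    simp only [pieceMap, coeZ2, Prod.fst_add, Prod.snd_add, Prod.smul_fst, Prod.smul_snd,
      smul_eq_mul]
  · positivity
  · positivity
  · rw [inv_mul_le_iff₀ hn0]; nlinarith
  · rw [inv_mul_le_iff₀ hn0]; nlinarith

lemma dist_pieceMap (n : ℕ) (hn : 2 ≤ n) (d : ℤ × ℤ) (x y : ℝ × ℝ) :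
    dist (pieceMap n d x) (pieceMap n d y) = (n:ℝ)⁻¹ * dist x y := by
  have : ‖((n:ℝ)⁻¹)‖ = (n:ℝ)⁻¹ := by
    rw [Real.norm_eq_abs, abs_of_nonneg]; positivity
  simp [pieceMap, dist_smul₀, this]

lemma K_subset_unitSq {n : ℕ} {D : Set (ℤ × ℤ)} {K : Set (ℝ × ℝ)}
    (hK : IsFractalSquare n D K) : K ⊆ unitSq := by
  obtain ⟨hn, hD, -, -, hne, hcomp, hfix⟩ := hK
  have hcont : Continuous fun x : ℝ × ℝ => Metric.infDist x unitSq :=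
    Metric.continuous_infDist_pt unitSq
  obtain ⟨x₀, hx₀K, hmax⟩ := hcomp.exists_isMaxOn hne hcont.continuousOn
  have hm0 : Metric.infDist x₀ unitSq ≤ 0 := by
    by_contra h
    push_neg at h
    have hx := hx₀K
    rw [hfix] at hx
    simp only [Set.mem_iUnion, Set.mem_image, exists_prop] at hx
    obtain ⟨d, hd, y, hyK, hpy⟩ := hx
    obtain ⟨z, hz, hdz⟩ := unitSq_compact.exists_infDist_eq_dist unitSq_nonempty y
    have h1 : Metric.infDist x₀ unitSq ≤ dist x₀ (pieceMap n d z) :=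
      Metric.infDist_le_dist_of_mem (pieceMap_mapsTo n hn d (hD hd) hz)
    have h1' : dist x₀ (pieceMap n d z) = (n:ℝ)⁻¹ * dist y z := by
      rw [← hpy, dist_pieceMap n hn]
    have h2 : dist y z = Metric.infDist y unitSq := hdz.symm
    have h3 : Metric.infDist y unitSq ≤ Metric.infDist x₀ unitSq := hmax hyK
    have hn2 : (2:ℝ) ≤ (n:ℝ) := by exact_mod_cast hn
    have hinv : (n:ℝ)⁻¹ ≤ (2:ℝ)⁻¹ := by
      apply inv_anti₀ <;> norm_num
      exact_mod_cast hn2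
    nlinarith [dist_nonneg (x := y) (y := z)]
  intro y hy
  have h1 : Metric.infDist y unitSq ≤ 0 := le_trans (hmax hy) hm0
  have h2 : Metric.infDist y unitSq = 0 :=
    le_antisymm h1 Metric.infDist_nonneg
  have : y ∈ closure unitSq := by
    rw [Metric.mem_closure_iff_infDist_zero unitSq_nonempty] at *; exact h2
  have hcl : IsClosed unitSq := by unfold unitSq; exact isClosed_Icc
  rwa [hcl.closure_eq] at this

lemma pieceMap_fst (n : ℕ) (d : ℤ × ℤ) (x : ℝ × ℝ) :
    (pieceMap n d x).1 = (n:ℝ)⁻¹ * (x.1 + (d.1 : ℝ)) := rfl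
lemma pieceMap_snd (n : ℕ) (d : ℤ × ℤ) (x : ℝ × ℝ) :
    (pieceMap n d x).2 = (n:ℝ)⁻¹ * (x.2 + (d.2 : ℝ)) := rfl

lemma gamma_fst (n : ℕ) (d d' α : ℤ × ℤ) :
    ((d' + n • α - d).1 : ℝ) = (d'.1 : ℝ) + (n : ℝ) * (α.1 : ℝ) - (d.1 : ℝ) := by
  have h : (d' + n • α - d).1 = d'.1 + (n : ℤ) * α.1 - d.1 := by
    simp [Prod.fst_add, Prod.fst_sub, Prod.smul_fst, nsmul_eq_mul]
  rw [h]; push_cast; ring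

lemma gamma_snd (n : ℕ) (d d' α : ℤ × ℤ) :
    ((d' + n • α - d).2 : ℝ) = (d'.2 : ℝ) + (n : ℝ) * (α.2 : ℝ) - (d.2 : ℝ) := by
  have h : (d' + n • α - d).2 = d'.2 + (n : ℤ) * α.2 - d.2 := by
    simp [Prod.snd_add, Prod.snd_sub, Prod.smul_snd, nsmul_eq_mul]
  rw [h]; push_cast; ring

lemma Fset_bound {K : Set (ℝ × ℝ)} (hsub : K ⊆ unitSq) (γ : ℤ × ℤ)
    (hne : (Fset K γ).Nonempty) : |γ.1| ≤ 1 ∧ |γ.2| ≤ 1 := by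
  obtain ⟨y, hyK, z, hzK, hzy⟩ := hne
  have h1 := hsub hyK
  have h2 := hsub hzK
  simp only [unitSq, Set.mem_Icc, Prod.le_def] at h1 h2
  have e1 : z.1 + (γ.1 : ℝ) = y.1 := congrArg Prod.fst hzy
  have e2 : z.2 + (γ.2 : ℝ) = y.2 := congrArg Prod.snd hzy
  constructor
  · have : |(γ.1 : ℝ)| ≤ 1 := by
      rw [abs_le]
      constructor <;> linarith [h1.1.1, h1.2.1, h2.1.1, h2.2.1]
    exact_mod_cast this
  · have : |(γ.2 : ℝ)| ≤ 1 := by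
      rw [abs_le]
      constructor <;> linarith [h1.1.2, h1.2.2, h2.1.2, h2.2.2]
    exact_mod_cast this

lemma mem_Fset_decomp {n : ℕ} {D : Set (ℤ × ℤ)} {K : Set (ℝ × ℝ)}
    (hK : IsFractalSquare n D K) (α : ℤ × ℤ) (x : ℝ × ℝ) :
    x ∈ Fset K α ↔ ∃ d ∈ D, ∃ d' ∈ D, x ∈ pieceMap n d '' Fset K (d' + n • α - d) := by
  obtain ⟨hn, hD, -, -, -, -, hfix⟩ := hK
  have hn0 : ((n:ℝ)) ≠ 0 := by positivity
  constructor
  · rintro ⟨hxK, z, hzK, rfl⟩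
    rw [hfix] at hxK hzK
    simp only [Set.mem_iUnion, Set.mem_image, exists_prop] at hxK hzK
    obtain ⟨d, hd, y, hyK, hpy⟩ := hxK
    obtain ⟨d', hd', y', hy'K, hpy'⟩ := hzK
    refine ⟨d, hd, d', hd', y, ⟨hyK, y', hy'K, ?_⟩, hpy⟩
    have a1 := congrArg Prod.fst hpy
    have a2 := congrArg Prod.snd hpy
    have b1 := congrArg Prod.fst hpy'
    have b2 := congrArg Prod.snd hpy'
    simp only [pieceMap_fst, pieceMap_snd, Prod.fst_add, Prod.snd_add] at a1 a2 b1 b2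
    apply Prod.ext
    · show y'.1 + ((d' + n • α - d).1 : ℝ) = y.1
      rw [gamma_fst]
      field_simp at a1 b1
      have hα1 : (coeZ2 α).1 = (α.1:ℝ) := rfl
      rw [hα1] at a1
      linarith
    · show y'.2 + ((d' + n • α - d).2 : ℝ) = y.2
      rw [gamma_snd]
      field_simp at a2 b2
      have hα2 : (coeZ2 α).2 = (α.2:ℝ) := rfl
      rw [hα2] at a2
      linarith
  · rintro ⟨d, hd, d', hd', y, ⟨hyK, w, hwK, hwy⟩, rfl⟩
    constructor
    · rw [hfix]
      simp only [Set.mem_iUnion, Set.mem_image, exists_prop]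
      exact ⟨d, hd, y, hyK, rfl⟩
    · refine ⟨pieceMap n d' w, ?_, ?_⟩
      · rw [hfix]
        simp only [Set.mem_iUnion, Set.mem_image, exists_prop]
        exact ⟨d', hd', w, hwK, rfl⟩
      · have k1 : w.1 + ((d' + n • α - d).1 : ℝ) = y.1 := congrArg Prod.fst hwy
        have k2 : w.2 + ((d' + n • α - d).2 : ℝ) = y.2 := congrArg Prod.snd hwy
        apply Prod.ext
        · show (pieceMap n d' w).1 + (α.1:ℝ) = (pieceMap n d y).1
          rw [pieceMap_fst, pieceMap_fst]
          rw [gamma_fst] at k1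
          field_simp
          linarith
        · show (pieceMap n d' w).2 + (α.2:ℝ) = (pieceMap n d y).2
          rw [pieceMap_snd, pieceMap_snd]
          rw [gamma_snd] at k2
          field_simp
          linarith

lemma mem_unitSq (x : ℝ × ℝ) (h1 : 0 ≤ x.1) (h2 : x.1 ≤ 1) (h3 : 0 ≤ x.2) (h4 : x.2 ≤ 1) :
    x ∈ unitSq := by
  simp only [unitSq, Set.mem_Icc, Prod.le_def]
  exact ⟨⟨h1, h3⟩, h2, h4⟩

lemma face_e1 (n : ℕ) (hn : 2 ≤ n) (d : ℤ × ℤ) (h1 : d.1 = (n:ℤ) - 1)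
    (h2 : 0 ≤ d.2) (h3 : d.2 ≤ (n:ℤ) - 1) : coeZ2 d ∈ ((n:ℝ) - 1) • faceP (1, 0) := by
  have hpos : (0:ℝ) < (n:ℝ) - 1 := by
    have : (2:ℝ) ≤ (n:ℝ) := by exact_mod_cast hn
    linarith
  have ht0 : (0:ℝ) ≤ (d.2:ℝ) / ((n:ℝ) - 1) := by
    apply div_nonneg _ hpos.le; exact_mod_cast h2
  have ht1 : (d.2:ℝ) / ((n:ℝ) - 1) ≤ 1 := by
    rw [div_le_one hpos]; have : (d.2:ℝ) ≤ (n:ℝ) - 1 := by exact_mod_cast h3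
    linarith
  refine Set.mem_smul_set.mpr ⟨((1:ℝ), (d.2:ℝ) / ((n:ℝ) - 1)), ⟨?_, ?_⟩, ?_⟩
  · exact mem_unitSq _ (by norm_num) (by norm_num) ht0 ht1
  · refine ⟨((0:ℝ), (d.2:ℝ) / ((n:ℝ) - 1)), mem_unitSq _ le_rfl (by norm_num) ht0 ht1, ?_⟩
    show ((0:ℝ), (d.2:ℝ) / ((n:ℝ) - 1)) + coeZ2 (1, 0) = _
    simp [coeZ2, Prod.ext_iff]
  · apply Prod.ext
    · show ((n:ℝ) - 1) * 1 = (d.1 : ℝ)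
      rw [h1]; push_cast; ring
    · show ((n:ℝ) - 1) * ((d.2:ℝ) / ((n:ℝ) - 1)) = (d.2 : ℝ)
      field_simp

lemma face_ne1 (n : ℕ) (hn : 2 ≤ n) (d : ℤ × ℤ) (h1 : d.1 = 0)
    (h2 : 0 ≤ d.2) (h3 : d.2 ≤ (n:ℤ) - 1) : coeZ2 d ∈ ((n:ℝ) - 1) • faceP (-1, 0) := by
  have hpos : (0:ℝ) < (n:ℝ) - 1 := by
    have : (2:ℝ) ≤ (n:ℝ) := by exact_mod_cast hn
    linarith
  have ht0 : (0:ℝ) ≤ (d.2:ℝ) / ((n:ℝ) - 1) := by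
    apply div_nonneg _ hpos.le; exact_mod_cast h2
  have ht1 : (d.2:ℝ) / ((n:ℝ) - 1) ≤ 1 := by
    rw [div_le_one hpos]; have : (d.2:ℝ) ≤ (n:ℝ) - 1 := by exact_mod_cast h3
    linarith
  refine Set.mem_smul_set.mpr ⟨((0:ℝ), (d.2:ℝ) / ((n:ℝ) - 1)), ⟨?_, ?_⟩, ?_⟩
  · exact mem_unitSq _ le_rfl (by norm_num) ht0 ht1
  · refine ⟨((1:ℝ), (d.2:ℝ) / ((n:ℝ) - 1)), mem_unitSq _ (by norm_num) le_rfl ht0 ht1, ?_⟩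
    show ((1:ℝ), (d.2:ℝ) / ((n:ℝ) - 1)) + coeZ2 (-1, 0) = _
    simp [coeZ2, Prod.ext_iff]
  · apply Prod.ext
    · show ((n:ℝ) - 1) * 0 = (d.1 : ℝ)
      rw [h1]; push_cast; ring
    · show ((n:ℝ) - 1) * ((d.2:ℝ) / ((n:ℝ) - 1)) = (d.2 : ℝ)
      field_simp

lemma face_e2 (n : ℕ) (hn : 2 ≤ n) (d : ℤ × ℤ) (h1 : d.2 = (n:ℤ) - 1)
    (h2 : 0 ≤ d.1) (h3 : d.1 ≤ (n:ℤ) - 1) : coeZ2 d ∈ ((n:ℝ) - 1) • faceP (0, 1) := by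
  have hpos : (0:ℝ) < (n:ℝ) - 1 := by
    have : (2:ℝ) ≤ (n:ℝ) := by exact_mod_cast hn
    linarith
  have ht0 : (0:ℝ) ≤ (d.1:ℝ) / ((n:ℝ) - 1) := by
    apply div_nonneg _ hpos.le; exact_mod_cast h2
  have ht1 : (d.1:ℝ) / ((n:ℝ) - 1) ≤ 1 := by
    rw [div_le_one hpos]; have : (d.1:ℝ) ≤ (n:ℝ) - 1 := by exact_mod_cast h3
    linarith
  refine Set.mem_smul_set.mpr ⟨((d.1:ℝ) / ((n:ℝ) - 1), (1:ℝ)), ⟨?_, ?_⟩, ?_⟩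
  · exact mem_unitSq _ ht0 ht1 (by norm_num) (by norm_num)
  · refine ⟨((d.1:ℝ) / ((n:ℝ) - 1), (0:ℝ)), mem_unitSq _ ht0 ht1 le_rfl (by norm_num), ?_⟩
    show ((d.1:ℝ) / ((n:ℝ) - 1), (0:ℝ)) + coeZ2 (0, 1) = _
    simp [coeZ2, Prod.ext_iff]
  · apply Prod.ext
    · show ((n:ℝ) - 1) * ((d.1:ℝ) / ((n:ℝ) - 1)) = (d.1 : ℝ)
      field_simp
    · show ((n:ℝ) - 1) * 1 = (d.2 : ℝ)
      rw [h1]; push_cast; ring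

lemma face_ne2 (n : ℕ) (hn : 2 ≤ n) (d : ℤ × ℤ) (h1 : d.2 = 0)
    (h2 : 0 ≤ d.1) (h3 : d.1 ≤ (n:ℤ) - 1) : coeZ2 d ∈ ((n:ℝ) - 1) • faceP (0, -1) := by
  have hpos : (0:ℝ) < (n:ℝ) - 1 := by
    have : (2:ℝ) ≤ (n:ℝ) := by exact_mod_cast hn
    linarith
  have ht0 : (0:ℝ) ≤ (d.1:ℝ) / ((n:ℝ) - 1) := by
    apply div_nonneg _ hpos.le; exact_mod_cast h2
  have ht1 : (d.1:ℝ) / ((n:ℝ) - 1) ≤ 1 := by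
    rw [div_le_one hpos]; have : (d.1:ℝ) ≤ (n:ℝ) - 1 := by exact_mod_cast h3
    linarith
  refine Set.mem_smul_set.mpr ⟨((d.1:ℝ) / ((n:ℝ) - 1), (0:ℝ)), ⟨?_, ?_⟩, ?_⟩
  · exact mem_unitSq _ ht0 ht1 le_rfl (by norm_num)
  · refine ⟨((d.1:ℝ) / ((n:ℝ) - 1), (1:ℝ)), mem_unitSq _ ht0 ht1 (by norm_num) le_rfl, ?_⟩
    show ((d.1:ℝ) / ((n:ℝ) - 1), (1:ℝ)) + coeZ2 (0, -1) = _
    simp [coeZ2, Prod.ext_iff]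
  · apply Prod.ext
    · show ((n:ℝ) - 1) * ((d.1:ℝ) / ((n:ℝ) - 1)) = (d.1 : ℝ)
      field_simp
    · show ((n:ℝ) - 1) * 0 = (d.2 : ℝ)
      rw [h1]; push_cast; ring

lemma smul_conv (n : ℕ) (α : ℤ × ℤ) : n • α = ((n : ℤ), (n : ℤ)) * α := by
  apply Prod.ext
  · show n • α.1 = (n : ℤ) * α.1
    simp [nsmul_eq_mul]
  · show n • α.2 = (n : ℤ) * α.2
    simp [nsmul_eq_mul]

lemma zsmul_conv (n : ℕ) (α : ℤ × ℤ) :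
    ((n : ℤ) - 1) • α = ((n : ℤ), (n : ℤ)) * α - α := by
  apply Prod.ext
  · show ((n : ℤ) - 1) • α.1 = (n : ℤ) * α.1 - α.1
    simp [zsmul_eq_mul]; ring
  · show ((n : ℤ) - 1) • α.2 = (n : ℤ) * α.2 - α.2
    simp [zsmul_eq_mul]; ring

lemma master (n : ℕ) (D : Set (ℤ × ℤ)) (K : Set (ℝ × ℝ)) (hK : IsFractalSquare n D K)
    (α β : ℤ × ℤ)
    (Hd : ∀ d ∈ D, ∀ d' ∈ D, |(d' + n • α - d).1| ≤ 1 → |(d' + n • α - d).2| ≤ 1 →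
      (d' + n • α - d = α ∨ d' + n • α - d = α + β ∨ d' + n • α - d = α - β) ∧
      coeZ2 d ∈ ((n:ℝ) - 1) • faceP α ∧ coeZ2 d' ∈ ((n:ℝ) - 1) • faceP (-α)) :
    Fset K α =
      (⋃ g ∈ Gset n D α 0, pieceMap n g '' Fset K α) ∪
      (⋃ g ∈ Gset n D α β, pieceMap n g '' Fset K (α + β)) ∪
      (⋃ g ∈ Gset n D α (-β), pieceMap n g '' Fset K (α - β)) := by
  have hsub := K_subset_unitSq hK
  ext x
  rw [mem_Fset_decomp hK α x]
  simp only [Set.mem_union, Set.mem_iUnion, exists_prop]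
  constructor
  · rintro ⟨d, hd, d', hd', y, hyF, rfl⟩
    have hne : (Fset K (d' + n • α - d)).Nonempty := ⟨y, hyF⟩
    obtain ⟨hb1, hb2⟩ := Fset_bound hsub _ hne
    obtain ⟨hcase, hfd, hfd'⟩ := Hd d hd d' hd' hb1 hb2
    rcases hcase with hc | hc | hc
    · left; left
      refine ⟨d, ⟨⟨hd, hfd⟩, d', ⟨hd', hfd'⟩, ?_⟩, y, hc ▸ hyF, rfl⟩
      show d' + (((n : ℤ) - 1) • α - 0) = d
      rw [zsmul_conv]
      rw [smul_conv] at hc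
      linear_combination hc
    · left; right
      refine ⟨d, ⟨⟨hd, hfd⟩, d', ⟨hd', hfd'⟩, ?_⟩, y, hc ▸ hyF, rfl⟩
      show d' + (((n : ℤ) - 1) • α - β) = d
      rw [zsmul_conv]
      rw [smul_conv] at hc
      linear_combination hc
    · right
      refine ⟨d, ⟨⟨hd, hfd⟩, d', ⟨hd', hfd'⟩, ?_⟩, y, hc ▸ hyF, rfl⟩
      show d' + (((n : ℤ) - 1) • α - -β) = d
      rw [zsmul_conv]
      rw [smul_conv] at hc
      linear_combination hc
  · rintro ((⟨g, ⟨⟨hgD, -⟩, e, ⟨heD, -⟩, heg⟩, y, hyF, rfl⟩ |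
      ⟨g, ⟨⟨hgD, -⟩, e, ⟨heD, -⟩, heg⟩, y, hyF, rfl⟩) |
      ⟨g, ⟨⟨hgD, -⟩, e, ⟨heD, -⟩, heg⟩, y, hyF, rfl⟩)
    · refine ⟨g, hgD, e, heD, y, ?_, rfl⟩
      have : e + n • α - g = α := by
        rw [zsmul_conv] at heg
        rw [smul_conv]
        linear_combination heg
      rw [this]; exact hyF
    · refine ⟨g, hgD, e, heD, y, ?_, rfl⟩
      have : e + n • α - g = α + β := by
        rw [zsmul_conv] at heg
        rw [smul_conv]
        linear_combination heg
      rw [this]; exact hyF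
    · refine ⟨g, hgD, e, heD, y, ?_, rfl⟩
      have : e + n • α - g = α - β := by
        rw [zsmul_conv] at heg
        rw [smul_conv]
        linear_combination heg
      rw [this]; exact hyF

lemma Hd_e1 (n : ℕ) (hn : 2 ≤ n) (D : Set (ℤ × ℤ))
    (hD : D ⊆ Set.Icc (0, 0) ((n : ℤ) - 1, (n : ℤ) - 1))
    (β : ℤ × ℤ) (hβ : β = (0, 1) ∨ β = (0, -1)) :
    ∀ d ∈ D, ∀ d' ∈ D,
      |(d' + n • ((1:ℤ), (0:ℤ)) - d).1| ≤ 1 → |(d' + n • ((1:ℤ), (0:ℤ)) - d).2| ≤ 1 →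
      (d' + n • ((1:ℤ), (0:ℤ)) - d = (1, 0) ∨ d' + n • ((1:ℤ), (0:ℤ)) - d = (1, 0) + β ∨
        d' + n • ((1:ℤ), (0:ℤ)) - d = (1, 0) - β) ∧
      coeZ2 d ∈ ((n:ℝ) - 1) • faceP (1, 0) ∧ coeZ2 d' ∈ ((n:ℝ) - 1) • faceP (-(1, 0)) := by
  intro d hd d' hd' h1 h2
  have hdb := hD hd
  have hd'b := hD hd'
  simp only [Set.mem_Icc, Prod.le_def] at hdb hd'b
  have g1 : (d' + n • ((1:ℤ), (0:ℤ)) - d).1 = d'.1 + (n:ℤ) - d.1 := by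
    simp [Prod.fst_add, Prod.fst_sub, Prod.smul_fst]
  have g2 : (d' + n • ((1:ℤ), (0:ℤ)) - d).2 = d'.2 - d.2 := by
    simp [Prod.snd_add, Prod.snd_sub, Prod.smul_snd]
  rw [g1, abs_le] at h1
  rw [g2, abs_le] at h2
  have e1 : d.1 = (n:ℤ) - 1 := by omega
  have e1' : d'.1 = 0 := by omega
  have key : d' + n • ((1:ℤ), (0:ℤ)) - d = (1, d'.2 - d.2) := by
    apply Prod.ext
    · rw [g1]; show _ = (1:ℤ); omega
    · rw [g2]
  refine ⟨?_, face_e1 n hn d e1 hdb.1.2 hdb.2.2, ?_⟩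
  · have h3 : d'.2 - d.2 = 0 ∨ d'.2 - d.2 = 1 ∨ d'.2 - d.2 = -1 := by omega
    rcases h3 with h | h | h
    · left; rw [key, h]
    · rcases hβ with rfl | rfl
      · right; left; rw [key, h]; decide
      · right; right; rw [key, h]; decide
    · rcases hβ with rfl | rfl
      · right; right; rw [key, h]; decide
      · right; left; rw [key, h]; decide
  · have : (-((1:ℤ), (0:ℤ)) : ℤ × ℤ) = (-1, 0) := by decide
    rw [this]
    exact face_ne1 n hn d' e1' hd'b.1.2 hd'b.2.2

lemma Hd_ne1 (n : ℕ) (hn : 2 ≤ n) (D : Set (ℤ × ℤ))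
    (hD : D ⊆ Set.Icc (0, 0) ((n : ℤ) - 1, (n : ℤ) - 1))
    (β : ℤ × ℤ) (hβ : β = (0, 1) ∨ β = (0, -1)) :
    ∀ d ∈ D, ∀ d' ∈ D,
      |(d' + n • ((-1:ℤ), (0:ℤ)) - d).1| ≤ 1 → |(d' + n • ((-1:ℤ), (0:ℤ)) - d).2| ≤ 1 →
      (d' + n • ((-1:ℤ), (0:ℤ)) - d = (-1, 0) ∨ d' + n • ((-1:ℤ), (0:ℤ)) - d = (-1, 0) + β ∨
        d' + n • ((-1:ℤ), (0:ℤ)) - d = (-1, 0) - β) ∧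
      coeZ2 d ∈ ((n:ℝ) - 1) • faceP (-1, 0) ∧ coeZ2 d' ∈ ((n:ℝ) - 1) • faceP (-(-1, 0)) := by
  intro d hd d' hd' h1 h2
  have hdb := hD hd
  have hd'b := hD hd'
  simp only [Set.mem_Icc, Prod.le_def] at hdb hd'b
  have g1 : (d' + n • ((-1:ℤ), (0:ℤ)) - d).1 = d'.1 - (n:ℤ) - d.1 := by
    simp [Prod.fst_add, Prod.fst_sub, Prod.smul_fst]; ring
  have g2 : (d' + n • ((-1:ℤ), (0:ℤ)) - d).2 = d'.2 - d.2 := by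
    simp [Prod.snd_add, Prod.snd_sub, Prod.smul_snd]
  rw [g1, abs_le] at h1
  rw [g2, abs_le] at h2
  have e1 : d.1 = 0 := by omega
  have e1' : d'.1 = (n:ℤ) - 1 := by omega
  have key : d' + n • ((-1:ℤ), (0:ℤ)) - d = (-1, d'.2 - d.2) := by
    apply Prod.ext
    · rw [g1]; show _ = (-1:ℤ); omega
    · rw [g2]
  refine ⟨?_, face_ne1 n hn d e1 hdb.1.2 hdb.2.2, ?_⟩
  · have h3 : d'.2 - d.2 = 0 ∨ d'.2 - d.2 = 1 ∨ d'.2 - d.2 = -1 := by omega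
    rcases h3 with h | h | h
    · left; rw [key, h]
    · rcases hβ with rfl | rfl
      · right; left; rw [key, h]; decide
      · right; right; rw [key, h]; decide
    · rcases hβ with rfl | rfl
      · right; right; rw [key, h]; decide
      · right; left; rw [key, h]; decide
  · have : (-((-1:ℤ), (0:ℤ)) : ℤ × ℤ) = (1, 0) := by decide
    rw [this]
    exact face_e1 n hn d' e1' hd'b.1.2 hd'b.2.2

lemma Hd_e2 (n : ℕ) (hn : 2 ≤ n) (D : Set (ℤ × ℤ))
    (hD : D ⊆ Set.Icc (0, 0) ((n : ℤ) - 1, (n : ℤ) - 1))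
    (β : ℤ × ℤ) (hβ : β = (1, 0) ∨ β = (-1, 0)) :
    ∀ d ∈ D, ∀ d' ∈ D,
      |(d' + n • ((0:ℤ), (1:ℤ)) - d).1| ≤ 1 → |(d' + n • ((0:ℤ), (1:ℤ)) - d).2| ≤ 1 →
      (d' + n • ((0:ℤ), (1:ℤ)) - d = (0, 1) ∨ d' + n • ((0:ℤ), (1:ℤ)) - d = (0, 1) + β ∨
        d' + n • ((0:ℤ), (1:ℤ)) - d = (0, 1) - β) ∧
      coeZ2 d ∈ ((n:ℝ) - 1) • faceP (0, 1) ∧ coeZ2 d' ∈ ((n:ℝ) - 1) • faceP (-(0, 1)) := by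
  intro d hd d' hd' h1 h2
  have hdb := hD hd
  have hd'b := hD hd'
  simp only [Set.mem_Icc, Prod.le_def] at hdb hd'b
  have g1 : (d' + n • ((0:ℤ), (1:ℤ)) - d).1 = d'.1 - d.1 := by
    simp [Prod.fst_add, Prod.fst_sub, Prod.smul_fst]
  have g2 : (d' + n • ((0:ℤ), (1:ℤ)) - d).2 = d'.2 + (n:ℤ) - d.2 := by
    simp [Prod.snd_add, Prod.snd_sub, Prod.smul_snd]
  rw [g1, abs_le] at h1
  rw [g2, abs_le] at h2
  have e1 : d.2 = (n:ℤ) - 1 := by omega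
  have e1' : d'.2 = 0 := by omega
  have key : d' + n • ((0:ℤ), (1:ℤ)) - d = (d'.1 - d.1, 1) := by
    apply Prod.ext
    · rw [g1]
    · rw [g2]; show _ = (1:ℤ); omega
  refine ⟨?_, face_e2 n hn d e1 hdb.1.1 hdb.2.1, ?_⟩
  · have h3 : d'.1 - d.1 = 0 ∨ d'.1 - d.1 = 1 ∨ d'.1 - d.1 = -1 := by omega
    rcases h3 with h | h | h
    · left; rw [key, h]
    · rcases hβ with rfl | rfl
      · right; left; rw [key, h]; decide
      · right; right; rw [key, h]; decide
    · rcases hβ with rfl | rfl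
      · right; right; rw [key, h]; decide
      · right; left; rw [key, h]; decide
  · have : (-((0:ℤ), (1:ℤ)) : ℤ × ℤ) = (0, -1) := by decide
    rw [this]
    exact face_ne2 n hn d' e1' hd'b.1.1 hd'b.2.1

lemma Hd_ne2 (n : ℕ) (hn : 2 ≤ n) (D : Set (ℤ × ℤ))
    (hD : D ⊆ Set.Icc (0, 0) ((n : ℤ) - 1, (n : ℤ) - 1))
    (β : ℤ × ℤ) (hβ : β = (1, 0) ∨ β = (-1, 0)) :
    ∀ d ∈ D, ∀ d' ∈ D,
      |(d' + n • ((0:ℤ), (-1:ℤ)) - d).1| ≤ 1 → |(d' + n • ((0:ℤ), (-1:ℤ)) - d).2| ≤ 1 →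
      (d' + n • ((0:ℤ), (-1:ℤ)) - d = (0, -1) ∨ d' + n • ((0:ℤ), (-1:ℤ)) - d = (0, -1) + β ∨
        d' + n • ((0:ℤ), (-1:ℤ)) - d = (0, -1) - β) ∧
      coeZ2 d ∈ ((n:ℝ) - 1) • faceP (0, -1) ∧ coeZ2 d' ∈ ((n:ℝ) - 1) • faceP (-(0, -1)) := by
  intro d hd d' hd' h1 h2
  have hdb := hD hd
  have hd'b := hD hd'
  simp only [Set.mem_Icc, Prod.le_def] at hdb hd'b
  have g1 : (d' + n • ((0:ℤ), (-1:ℤ)) - d).1 = d'.1 - d.1 := by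
    simp [Prod.fst_add, Prod.fst_sub, Prod.smul_fst]
  have g2 : (d' + n • ((0:ℤ), (-1:ℤ)) - d).2 = d'.2 - (n:ℤ) - d.2 := by
    simp [Prod.snd_add, Prod.snd_sub, Prod.smul_snd]; ring
  rw [g1, abs_le] at h1
  rw [g2, abs_le] at h2
  have e1 : d.2 = 0 := by omega
  have e1' : d'.2 = (n:ℤ) - 1 := by omega
  have key : d' + n • ((0:ℤ), (-1:ℤ)) - d = (d'.1 - d.1, -1) := by
    apply Prod.ext
    · rw [g1]
    · rw [g2]; show _ = (-1:ℤ); omega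
  refine ⟨?_, face_ne2 n hn d e1 hdb.1.1 hdb.2.1, ?_⟩
  · have h3 : d'.1 - d.1 = 0 ∨ d'.1 - d.1 = 1 ∨ d'.1 - d.1 = -1 := by omega
    rcases h3 with h | h | h
    · left; rw [key, h]
    · rcases hβ with rfl | rfl
      · right; left; rw [key, h]; decide
      · right; right; rw [key, h]; decide
    · rcases hβ with rfl | rfl
      · right; right; rw [key, h]; decide
      · right; left; rw [key, h]; decide
  · have : (-((0:ℤ), (-1:ℤ)) : ℤ × ℤ) = (0, 1) := by decide
    rw [this]
    exact face_e2 n hn d' e1' hd'b.1.1 hd'b.2.1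

/-- For a side direction `α` and a unit coordinate vector `β ⊥ α`,
the side intersection `F_α = K ∩ (K + α)` satisfies
`F_α = (F_α + G_α)/n ∪ (F_{α+β} + G_{α,β})/n ∪ (F_{α-β} + G_{α,-β})/n`. -/
theorem fractalSquare_sideIntersection_eq
    (n : ℕ) (D : Set (ℤ × ℤ)) (K : Set (ℝ × ℝ))
    (hK : IsFractalSquare n D K) (α β : ℤ × ℤ)
    (hα : α ∈ ({(1, 0), (-1, 0), (0, 1), (0, -1)} : Set (ℤ × ℤ)))
    (hβ : β ∈ ({(1, 0), (-1, 0), (0, 1), (0, -1)} : Set (ℤ × ℤ)))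
    (hperp : α.1 * β.1 + α.2 * β.2 = 0) :
    Fset K α =
      (⋃ g ∈ Gset n D α 0, pieceMap n g '' Fset K α) ∪
      (⋃ g ∈ Gset n D α β, pieceMap n g '' Fset K (α + β)) ∪
      (⋃ g ∈ Gset n D α (-β), pieceMap n g '' Fset K (α - β)) := by
  have hn := hK.1
  have hD := hK.2.1
  simp only [Set.mem_insert_iff, Set.mem_singleton_iff] at hα hβ
  rcases hα with rfl | rfl | rfl | rfl
  · have hβ' : β = (0, 1) ∨ β = (0, -1) := by
      rcases hβ with rfl | rfl | rfl | rfl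
      · exfalso; norm_num at hperp
      · exfalso; norm_num at hperp
      · left; rfl
      · right; rfl
    exact master n D K hK _ _ (Hd_e1 n hn D hD β hβ')
  · have hβ' : β = (0, 1) ∨ β = (0, -1) := by
      rcases hβ with rfl | rfl | rfl | rfl
      · exfalso; norm_num at hperp
      · exfalso; norm_num at hperp
      · left; rfl
      · right; rfl
    exact master n D K hK _ _ (Hd_ne1 n hn D hD β hβ')
  · have hβ' : β = (1, 0) ∨ β = (-1, 0) := by
      rcases hβ with rfl | rfl | rfl | rfl
      · left; rfl
      · right; rfl
      · exfalso; norm_num at hperp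
      · exfalso; norm_num at hperp
    exact master n D K hK _ _ (Hd_e2 n hn D hD β hβ')
  · have hβ' : β = (1, 0) ∨ β = (-1, 0) := by
      rcases hβ with rfl | rfl | rfl | rfl
      · left; rfl
      · right; rfl
      · exfalso; norm_num at hperp
      · exfalso; norm_num at hperp
    exact master n D K hK _ _ (Hd_ne2 n hn D hD β hβ')
end
end

section
/- Let K₁ and K₂ be fractal segments of order n with digit sets D₁ and D₂. For a ∈ {−1,0,1} set F_a = K₁ ∩ (K₂ + a) and G_a = D₁ ∩ (D₂ − a). If G₀ = {d₀} is a singleton and (F₁ + G₁) ∪ (F_{−1} + G_{−1}) = ∅, then F₀ = K₁ ∩ K₂ is the singleton {d₀/(n−1)}. -/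
open Set Pointwise

noncomputable section

/-- `K` is a fractal segment of order `n` with (nonempty) digit set `D ⊆ {0,…,n-1}`:
a nonempty compact set with `K = (K + D)/n`. -/
def IsFractalSegment (n : ℕ) (D : Set ℤ) (K : Set ℝ) : Prop :=
  2 ≤ n ∧ D.Nonempty ∧ D ⊆ Set.Icc 0 ((n : ℤ) - 1) ∧
  K.Nonempty ∧ IsCompact K ∧
  K = ⋃ d ∈ D, (fun x => (x + (d : ℝ)) / n) '' K

lemma frac_subset_Icc {n : ℕ} {D : Set ℤ} {K : Set ℝ}
    (h : IsFractalSegment n D K) : K ⊆ Set.Icc 0 1 := by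
  obtain ⟨hn, -, hD, hKne, hKc, hKeq⟩ := h
  have hn2 : (2:ℝ) ≤ n := by exact_mod_cast hn
  have hne : (n:ℝ) ≠ 0 := by linarith
  have hbdd := hKc.bddAbove
  have hbddb := hKc.bddBelow
  set M := sSup K with hMdef
  set m := sInf K with hmdef
  have hM : M ∈ K := hKc.sSup_mem hKne
  have hm : m ∈ K := hKc.sInf_mem hKne
  have hM1 : M ≤ 1 := by
    rw [hKeq] at hM
    simp only [Set.mem_iUnion, Set.mem_image] at hM
    obtain ⟨d, hd, y, hy, hxy⟩ := hM
    have hyM : y ≤ M := le_csSup hbdd hy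
    have hdle : (d:ℝ) ≤ (n:ℝ) - 1 := by
      have h' := (hD hd).2
      have : ((d:ℝ)) ≤ ((n:ℤ) - 1 : ℤ) := by exact_mod_cast h'
      push_cast at this; linarith
    rw [div_eq_iff hne] at hxy
    nlinarith [hxy, hyM, hdle]
  have hm0 : 0 ≤ m := by
    rw [hKeq] at hm
    simp only [Set.mem_iUnion, Set.mem_image] at hm
    obtain ⟨d, hd, y, hy, hxy⟩ := hm
    have hyM : m ≤ y := csInf_le hbddb hy
    have hdge : (0:ℝ) ≤ (d:ℝ) := by exact_mod_cast (hD hd).1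
    rw [div_eq_iff hne] at hxy
    nlinarith [hxy, hyM, hdge]
  intro x hx
  exact ⟨le_trans hm0 (csInf_le hbddb hx), le_trans (le_csSup hbdd hx) hM1⟩

lemma frac_fixed_mem {n : ℕ} {D : Set ℤ} {K : Set ℝ}
    (h : IsFractalSegment n D K) {d : ℤ} (hd : d ∈ D) :
    (d:ℝ) / ((n:ℝ) - 1) ∈ K := by
  obtain ⟨hn, -, -, ⟨x₀, hx₀⟩, hKc, hKeq⟩ := h
  have hn2 : (2:ℝ) ≤ n := by exact_mod_cast hn
  have hne : (n:ℝ) ≠ 0 := by linarith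
  have hne1 : (n:ℝ) - 1 ≠ 0 := by linarith
  set p : ℝ := (d:ℝ) / ((n:ℝ) - 1) with hp
  have hstep : ∀ x ∈ K, (x + (d:ℝ))/n ∈ K := by
    intro x hx
    rw [hKeq]
    exact Set.mem_iUnion₂.mpr ⟨d, hd, ⟨x, hx, rfl⟩⟩
  have key : ∀ k : ℕ, p + (x₀ - p) * (1/(n:ℝ))^k ∈ K := by
    intro k
    induction k with
    | zero => simpa using hx₀
    | succ k ih =>
        have : p + (x₀ - p) * (1/(n:ℝ))^(k+1)
            = ((p + (x₀ - p) * (1/(n:ℝ))^k) + (d:ℝ))/n := by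
          have hpn : p * ((n:ℝ) - 1) = d := by rw [hp]; field_simp
          have hrn : 1/(n:ℝ) * n = 1 := by field_simp
          rw [eq_div_iff hne, pow_succ]
          linear_combination hpn + (x₀ - p) * (1/(n:ℝ))^k * hrn
        rw [this]
        exact hstep _ ih
  have hlim : Filter.Tendsto (fun k : ℕ => p + (x₀ - p) * (1/(n:ℝ))^k)
      Filter.atTop (nhds p) := by
    have h0 : Filter.Tendsto (fun k : ℕ => (1/(n:ℝ))^k) Filter.atTop (nhds 0) := by
      apply tendsto_pow_atTop_nhds_zero_of_lt_one
      · positivity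
      · rw [div_lt_one (by linarith)]; linarith
    have := (h0.const_mul (x₀ - p)).const_add p
    simpa using this
  exact hKc.isClosed.mem_of_tendsto hlim (Filter.Eventually.of_forall key)

/-- `F_a = K₁ ∩ (K₂ + a)`. -/
def segF (K₁ K₂ : Set ℝ) (a : ℤ) : Set ℝ := K₁ ∩ ((· + (a : ℝ)) '' K₂)

/-- `G_a = D₁ ∩ (D₂ - a)`. -/
def segG (D₁ D₂ : Set ℤ) (a : ℤ) : Set ℤ := D₁ ∩ ((· - a) '' D₂)

/-- If `G₀ = {d₀}` and `(F₁ + G₁) ∪ (F₋₁ + G₋₁) = ∅`, then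
`F₀ = K₁ ∩ K₂` is the singleton `{d₀/(n-1)}`. -/
theorem fractalSegment_singleton_intersection
    (n : ℕ) (D₁ D₂ : Set ℤ) (K₁ K₂ : Set ℝ)
    (h1 : IsFractalSegment n D₁ K₁) (h2 : IsFractalSegment n D₂ K₂)
    (d₀ : ℤ) (hG0 : segG D₁ D₂ 0 = {d₀})
    (hempty : (segF K₁ K₂ 1 + (fun g : ℤ => (g : ℝ)) '' segG D₁ D₂ 1) ∪
      (segF K₁ K₂ (-1) + (fun g : ℤ => (g : ℝ)) '' segG D₁ D₂ (-1)) = ∅) :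
    K₁ ∩ K₂ = {(d₀ : ℝ) / ((n : ℝ) - 1)} := by
  have hIcc1 := frac_subset_Icc h1
  have hIcc2 := frac_subset_Icc h2
  -- d₀ ∈ D₁ ∩ D₂
  have hd₀G : d₀ ∈ segG D₁ D₂ 0 := by rw [hG0]; rfl
  have hd₀1 : d₀ ∈ D₁ := hd₀G.1
  have hd₀2 : d₀ ∈ D₂ := by
    obtain ⟨e, he, hee⟩ := hd₀G.2
    simp only [sub_zero] at hee; rwa [← hee]
  set p : ℝ := (d₀:ℝ) / ((n:ℝ) - 1) with hp
  have hpS : p ∈ K₁ ∩ K₂ := ⟨frac_fixed_mem h1 hd₀1, frac_fixed_mem h2 hd₀2⟩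
  obtain ⟨hn, -, hD1, hK1ne, hK1c, hK1eq⟩ := h1
  obtain ⟨-, -, hD2, hK2ne, hK2c, hK2eq⟩ := h2
  have hn2 : (2:ℝ) ≤ n := by exact_mod_cast hn
  have hne : (n:ℝ) ≠ 0 := by linarith
  have hne1 : (n:ℝ) - 1 ≠ 0 := by linarith
  have hEmp : ∀ z : ℝ, z ∈ (segF K₁ K₂ 1 + (fun g : ℤ => (g : ℝ)) '' segG D₁ D₂ 1) ∪
      (segF K₁ K₂ (-1) + (fun g : ℤ => (g : ℝ)) '' segG D₁ D₂ (-1)) → False := by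
    intro z hz; rw [hempty] at hz; exact hz
  -- the key step: every point of K₁ ∩ K₂ is (y + d₀)/n for some y ∈ K₁ ∩ K₂
  have hstep : ∀ x ∈ K₁ ∩ K₂, ∃ y ∈ K₁ ∩ K₂, x = (y + (d₀:ℝ))/n := by
    rintro x ⟨hx1, hx2⟩
    rw [hK1eq] at hx1
    rw [hK2eq] at hx2
    simp only [Set.mem_iUnion, Set.mem_image] at hx1 hx2
    obtain ⟨d₁, hd₁, y₁, hy₁, hxy₁⟩ := hx1
    obtain ⟨d₂, hd₂, y₂, hy₂, hxy₂⟩ := hx2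
    have heqd : (y₁ + (d₁:ℝ)) / n = (y₂ + (d₂:ℝ)) / n := hxy₁.trans hxy₂.symm
    rw [div_eq_div_iff (by linarith) (by linarith)] at heqd
    have heq : y₁ + (d₁:ℝ) = y₂ + (d₂:ℝ) := mul_right_cancel₀ hne heqd
    have hb1 := hIcc1 hy₁
    have hb2 := hIcc2 hy₂
    have haR : ((d₂ - d₁ : ℤ) : ℝ) = y₁ - y₂ := by push_cast; linarith
    have ha1 : ((d₂ - d₁ : ℤ) : ℝ) ≤ 1 := by rw [haR]; linarith [hb1.2, hb2.1]
    have ha2 : (-1 : ℝ) ≤ ((d₂ - d₁ : ℤ) : ℝ) := by rw [haR]; linarith [hb1.1, hb2.2]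
    have ha1' : d₂ - d₁ ≤ 1 := by exact_mod_cast ha1
    have ha2' : (-1 : ℤ) ≤ d₂ - d₁ := by exact_mod_cast ha2
    have hcase : d₂ - d₁ = -1 ∨ d₂ - d₁ = 0 ∨ d₂ - d₁ = 1 := by omega
    rcases hcase with hc | hc | hc
    · -- a = -1 : contradiction with F₋₁ + G₋₁ = ∅
      exfalso
      have hyF : y₁ ∈ segF K₁ K₂ (-1) := by
        refine ⟨hy₁, y₂, hy₂, ?_⟩
        have : ((d₂ - d₁ : ℤ) : ℝ) = -1 := by rw [hc]; norm_num
        rw [haR] at this; push_cast; linarith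
      have hdG : d₁ ∈ segG D₁ D₂ (-1) := ⟨hd₁, d₂, hd₂, by show d₂ - (-1) = d₁; omega⟩
      exact hEmp _ (Set.mem_union_right _
        (Set.add_mem_add hyF ⟨d₁, hdG, rfl⟩))
    · -- a = 0 : the main case
      have hd12 : d₁ = d₂ := by omega
      have hdG : d₁ ∈ segG D₁ D₂ 0 := ⟨hd₁, d₂, hd₂, by show d₂ - 0 = d₁; omega⟩
      rw [hG0] at hdG
      have hd10 : d₁ = d₀ := hdG
      have hy12 : y₁ = y₂ := by
        have : ((d₂ - d₁ : ℤ) : ℝ) = 0 := by rw [hc]; norm_num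
        rw [haR] at this; linarith
      refine ⟨y₁, ⟨hy₁, hy12 ▸ hy₂⟩, ?_⟩
      rw [← hxy₁, hd10]
    · -- a = 1 : contradiction with F₁ + G₁ = ∅
      exfalso
      have hyF : y₁ ∈ segF K₁ K₂ 1 := by
        refine ⟨hy₁, y₂, hy₂, ?_⟩
        have : ((d₂ - d₁ : ℤ) : ℝ) = 1 := by rw [hc]; norm_num
        rw [haR] at this; push_cast; linarith
      have hdG : d₁ ∈ segG D₁ D₂ 1 := ⟨hd₁, d₂, hd₂, by show d₂ - 1 = d₁; omega⟩
      exact hEmp _ (Set.mem_union_left _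
        (Set.add_mem_add hyF ⟨d₁, hdG, rfl⟩))
  -- K₁ ∩ K₂ is mapped into itself by x ↦ (x + d₀)/n
  have hmaps : ∀ x ∈ K₁ ∩ K₂, (x + (d₀:ℝ))/n ∈ K₁ ∩ K₂ := by
    rintro x ⟨hx1, hx2⟩
    constructor
    · rw [hK1eq]; exact Set.mem_iUnion₂.mpr ⟨d₀, hd₀1, ⟨x, hx1, rfl⟩⟩
    · rw [hK2eq]; exact Set.mem_iUnion₂.mpr ⟨d₀, hd₀2, ⟨x, hx2, rfl⟩⟩
  have hSc : IsCompact (K₁ ∩ K₂) := hK1c.inter_right hK2c.isClosed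
  have hSne : (K₁ ∩ K₂).Nonempty := ⟨p, hpS⟩
  have hbdd : BddAbove (K₁ ∩ K₂) := hSc.bddAbove
  have hbddb : BddBelow (K₁ ∩ K₂) := hSc.bddBelow
  set M := sSup (K₁ ∩ K₂) with hMdef
  set m := sInf (K₁ ∩ K₂) with hmdef
  have hMS : M ∈ K₁ ∩ K₂ := hSc.sSup_mem hSne
  have hmS : m ∈ K₁ ∩ K₂ := hSc.sInf_mem hSne
  have hMp : M = p := by
    obtain ⟨y, hyS, hyM⟩ := hstep M hMS
    have h1' : (M + (d₀:ℝ))/n ≤ M := le_csSup hbdd (hmaps M hMS)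
    have h2' : y ≤ M := le_csSup hbdd hyS
    have hA : M * n = y + (d₀:ℝ) := by rw [hyM]; field_simp
    have hle1 : M + (d₀:ℝ) ≤ M * n := by
      rw [div_le_iff₀ (by linarith : (0:ℝ) < n)] at h1'; linarith
    have hEq : M * n = M + (d₀:ℝ) := le_antisymm (by linarith) hle1
    rw [hp, eq_div_iff hne1]; linear_combination hEq
  have hmp : m = p := by
    obtain ⟨y, hyS, hym⟩ := hstep m hmS
    have h1' : m ≤ (m + (d₀:ℝ))/n := csInf_le hbddb (hmaps m hmS)
    have h2' : m ≤ y := csInf_le hbddb hyS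
    have hA : m * n = y + (d₀:ℝ) := by rw [hym]; field_simp
    have hle1 : m * n ≤ m + (d₀:ℝ) := by
      rw [le_div_iff₀ (by linarith : (0:ℝ) < n)] at h1'; linarith
    have hEq : m * n = m + (d₀:ℝ) := le_antisymm hle1 (by linarith)
    rw [hp, eq_div_iff hne1]; linear_combination hEq
  ext x
  constructor
  · intro hx
    have hxM : x ≤ M := le_csSup hbdd hx
    have hxm : m ≤ x := csInf_le hbddb hx
    have : x = p := by rw [hMp] at hxM; rw [hmp] at hxm; linarith
    simpa using this
  · intro hx
    simp only [Set.mem_singleton_iff] at hx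
    rw [hx]; exact hpS
end
end
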